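/- Let φ(x₁,…,x_k) be a positive sentence (prenex form, no negation connective) inerre the first-order language of groups with parameters a₁,…,a_k ∈ Aut(Q̄). Then Aut(Q̄) ⊨ φ(a₁,…,a_k) if and only if for every n ∈ ℕ, Aut(Fₙ) ⊨ φ(a₁↾Fₙ,…,a_k↾Fₙ). -/

import Mathlib

noncomputable section

open Filter

/-! ### Computability preliminaries -/

/-- The finite initial segment of length `k` of a sequence. -/
def seg (f : ℕ → ℕ) (k : ℕ) : List ℕ := (List.range k).map f

/-- The finite initial segment of length `k` of an element of Cantor space. -/
def segB (A : ℕ → Bool) (k : ℕ) : List Bool := (List.range k).map A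

/-- The join (interleaving) of two sequences. -/
def joinSeq (f g : ℕ → ℕ) : ℕ → ℕ := fun n => if n % 2 = 0 then f (n / 2) else g (n / 2)

/-- Turing reducibility: there is a Turing functional (presented as a computable map on
finite oracle segments, consistent along the oracle `g`) computing `f` from `g`. -/
def TuringReducibleTo (f g : ℕ → ℕ) : Prop :=
  ∃ φ : List ℕ → ℕ → Option ℕ, Computable₂ φ ∧
    (∀ n k₁ k₂ m₁ m₂, φ (seg g k₁) n = some m₁ → φ (seg g k₂) n = some m₂ → m₁ = m₂) ∧
    (∀ n, ∃ k, φ (seg g k) n = some (f n))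

/-- A Turing ideal, presented as a degree-invariant collection of functions `ℕ → ℕ`
closed under join and downward closed under Turing reducibility. -/
structure IsTuringIdeal (I : Set (ℕ → ℕ)) : Prop where
  nonempty : I.Nonempty
  ne_univ : I ≠ Set.univ
  join_mem : ∀ f g, f ∈ I → g ∈ I → joinSeq f g ∈ I
  downward : ∀ f g, f ∈ I → TuringReducibleTo g f → g ∈ I

/-- A (characteristic function of a) subtree of `ω^{<ω}`. -/
def IsTreeB (T : List ℕ → Bool) : Prop :=
  ∀ l₁ l₂ : List ℕ, l₁ <+: l₂ → T l₂ = true → T l₁ = true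

/-- A function on an encodable domain is computable from the oracle `c`. -/
def funRed {α β : Type} [Denumerable α] [Primcodable β] (f : α → β) (c : ℕ → ℕ) : Prop :=
  TuringReducibleTo (fun n => Encodable.encode (f (Denumerable.ofNat α n))) c

/-- `d` is a PA degree relative to `c`: `d` computes a path through every infinite
`c`-computable finite-branching (`c`-computably bounded) tree. -/
def PARel (d c : ℕ → ℕ) : Prop :=
  ∀ (T : List ℕ → Bool) (b : List ℕ → ℕ),
    IsTreeB T → funRed T c → funRed b c →
    (∀ l x, T (l ++ [x]) = true → x < b l) →
    (∀ n, ∃ l : List ℕ, l.length = n ∧ T l = true) →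
    ∃ p : ℕ → ℕ, TuringReducibleTo p d ∧ ∀ k, T (seg p k) = true

/-- A Scott ideal: a Turing ideal containing, for each of its members,
a PA degree relative to that member. -/
def IsScottIdeal (I : Set (ℕ → ℕ)) : Prop :=
  IsTuringIdeal I ∧ ∀ c ∈ I, ∃ d ∈ I, PARel d c

/-- A set of natural numbers is `Π⁰₁`. -/
def Pi01 (S : Set ℕ) : Prop :=
  ∃ R : ℕ → ℕ → Bool, Computable₂ R ∧ ∀ m, m ∈ S ↔ ∀ s, R m s = true

/-- A set of natural numbers is `Σ⁰₂`. -/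
def Sigma02 (S : Set ℕ) : Prop :=
  ∃ R : ℕ → ℕ → ℕ → Bool,
    Computable (fun x : ℕ × ℕ × ℕ => R x.1 x.2.1 x.2.2) ∧
    ∀ m, m ∈ S ↔ ∃ a, ∀ b, R m a b = true

/-- The jump of an oracle `A : ℕ → ℕ`: the `i`-th partial computable function,
run on (codes of) finite initial segments of `A` with input `i`, halts. -/
def haltsRelN (A : ℕ → ℕ) (i : ℕ) : Prop :=
  ∃ s, ((Denumerable.ofNat Nat.Partrec.Code i).eval
      (Nat.pair (Encodable.encode (seg A s)) i)).Dom

/-- The jump of an oracle `A : ℕ → Bool`. -/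
def haltsRelB (A : ℕ → Bool) (i : ℕ) : Prop :=
  ∃ s, ((Denumerable.ofNat Nat.Partrec.Code i).eval
      (Nat.pair (Encodable.encode (segB A s)) i)).Dom

/-- The Turing functional with index `e`, given oracle `A`, computes the total
function `B` (consistently along `A`). -/
def OracleComputes (e : ℕ) (A B : ℕ → ℕ) : Prop :=
  (∀ n s₁ s₂ m₁ m₂,
      (Denumerable.ofNat Nat.Partrec.Code e).eval
          (Nat.pair (Encodable.encode (seg A s₁)) n) = Part.some m₁ →
      (Denumerable.ofNat Nat.Partrec.Code e).eval
          (Nat.pair (Encodable.encode (seg A s₂)) n) = Part.some m₂ →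
      m₁ = m₂) ∧
  (∀ n, ∃ s,
      (Denumerable.ofNat Nat.Partrec.Code e).eval
          (Nat.pair (Encodable.encode (seg A s)) n) = Part.some (B n))

/-- `φ` superapproximates `F : 2^ω → 2^ω`: for every oracle `A` and every `n`, the
stage-`s` values `φ(A↾s, n, s)` converge to the characteristic function of the
jump of `F(A)` at `n`. -/
def Superapproximates (φ : List Bool → ℕ → ℕ → Bool) (F : (ℕ → Bool) → ℕ → Bool) : Prop :=
  ∀ A : ℕ → Bool, ∀ n : ℕ, ∃ b : Bool,
    (∀ᶠ s in atTop, φ (segB A s) n s = b) ∧ (b = true ↔ haltsRelB (F A) n)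

/-- `F : 2^ω → 2^ω` is superapproximable. -/
def Superapproximable (F : (ℕ → Bool) → ℕ → Bool) : Prop :=
  ∃ φ : List Bool → ℕ → ℕ → Bool,
    Computable (fun x : List Bool × ℕ × ℕ => φ x.1 x.2.1 x.2.2) ∧ Superapproximates φ F

/-- The Turing functional with index `e` superapproximates `F : 2^ω → 2^ω`. -/
def CodeSuperapprox (e : ℕ) (F : (ℕ → Bool) → ℕ → Bool) : Prop :=
  ∀ A : ℕ → Bool, ∀ n : ℕ, ∃ b : Bool,
    (∀ᶠ s in atTop,
      (Denumerable.ofNat Nat.Partrec.Code e).eval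
          (Nat.pair (Encodable.encode (segB A s)) (Nat.pair n s)) = Part.some (cond b 1 0)) ∧
    (b = true ↔ haltsRelB (F A) n)

/-! ### The first-order language of groups -/

/-- Terms of the language of groups, with variables among `Fin k`. -/
inductive GrpTerm : ℕ → Type
  | var : ∀ {k}, Fin k → GrpTerm k
  | one : ∀ {k}, GrpTerm k
  | mul : ∀ {k}, GrpTerm k → GrpTerm k → GrpTerm k
  | inv : ∀ {k}, GrpTerm k → GrpTerm k

/-- Evaluation of a group term in a group `G` under a valuation of the variables. -/
def GrpTerm.eval {G : Type*} [Group G] : ∀ {k}, GrpTerm k → (Fin k → G) → G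
  | _, .var i, v => v i
  | _, .one, _ => 1
  | _, .mul t s, v => t.eval v * s.eval v
  | _, .inv t, v => (t.eval v)⁻¹

/-- First-order formulas of the language of groups (with negation pushed to atoms),
with free variables among `Fin k`.  Quantifiers bind the variable `0`. -/
inductive GrpFormula : ℕ → Type
  | eq : ∀ {k}, GrpTerm k → GrpTerm k → GrpFormula k
  | ne : ∀ {k}, GrpTerm k → GrpTerm k → GrpFormula k
  | and : ∀ {k}, GrpFormula k → GrpFormula k → GrpFormula k
  | or : ∀ {k}, GrpFormula k → GrpFormula k → GrpFormula k
  | all : ∀ {k}, GrpFormula (k + 1) → GrpFormula k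
  | ex : ∀ {k}, GrpFormula (k + 1) → GrpFormula k

/-- Tarskian satisfaction of a group formula in a group `G`. -/
def GrpFormula.Sat {G : Type*} [Group G] : ∀ {k}, GrpFormula k → (Fin k → G) → Prop
  | _, .eq t s, v => t.eval v = s.eval v
  | _, .ne t s, v => t.eval v ≠ s.eval v
  | _, .and φ ψ, v => φ.Sat v ∧ ψ.Sat v
  | _, .or φ ψ, v => φ.Sat v ∨ ψ.Sat v
  | _, .all φ, v => ∀ g : G, φ.Sat (Fin.cons g v)
  | _, .ex φ, v => ∃ g : G, φ.Sat (Fin.cons g v)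

/-- Satisfaction relativized to a subset `S` of `G` (e.g. a subgroup):
quantifiers range over `S`. -/
def GrpFormula.SatOn {G : Type*} [Group G] (S : Set G) :
    ∀ {k}, GrpFormula k → (Fin k → G) → Prop
  | _, .eq t s, v => t.eval v = s.eval v
  | _, .ne t s, v => t.eval v ≠ s.eval v
  | _, .and φ ψ, v => φ.SatOn S v ∧ ψ.SatOn S v
  | _, .or φ ψ, v => φ.SatOn S v ∨ ψ.SatOn S v
  | _, .all φ, v => ∀ g ∈ S, φ.SatOn S (Fin.cons g v)
  | _, .ex φ, v => ∃ g ∈ S, φ.SatOn S (Fin.cons g v)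

/-- A formula is positive iff it does not use negation (i.e. no negated atoms). -/
def GrpFormula.Positive : ∀ {k}, GrpFormula k → Prop
  | _, .eq _ _ => True
  | _, .ne _ _ => False
  | _, .and φ ψ => φ.Positive ∧ ψ.Positive
  | _, .or φ ψ => φ.Positive ∧ ψ.Positive
  | _, .all φ => φ.Positive
  | _, .ex φ => φ.Positive

/-- A formula is quantifier-free iff it uses no quantifiers. -/
def GrpFormula.QuantifierFree : ∀ {k}, GrpFormula k → Prop
  | _, .eq _ _ => True
  | _, .ne _ _ => True
  | _, .and φ ψ => φ.QuantifierFree ∧ ψ.QuantifierFree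
  | _, .or φ ψ => φ.QuantifierFree ∧ ψ.QuantifierFree
  | _, .all _ => False
  | _, .ex _ => False

/-- A quantifier-free formula is negative iff it is built from negated atoms
(inequations) using `∧` and `∨`. -/
def GrpFormula.NegQF : ∀ {k}, GrpFormula k → Prop
  | _, .eq _ _ => False
  | _, .ne _ _ => True
  | _, .and φ ψ => φ.NegQF ∧ ψ.NegQF
  | _, .or φ ψ => φ.NegQF ∧ ψ.NegQF
  | _, .all _ => False
  | _, .ex _ => False

/-- A Gödel numbering of group terms. -/
def GrpTerm.encode : ∀ {k}, GrpTerm k → ℕ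
  | _, .var i => Nat.pair 0 i.val
  | _, .one => Nat.pair 1 0
  | _, .mul t s => Nat.pair 2 (Nat.pair t.encode s.encode)
  | _, .inv t => Nat.pair 3 t.encode

/-- A Gödel numbering of group formulas. -/
def GrpFormula.encode : ∀ {k}, GrpFormula k → ℕ
  | _, .eq t s => Nat.pair 0 (Nat.pair t.encode s.encode)
  | _, .ne t s => Nat.pair 1 (Nat.pair t.encode s.encode)
  | _, .and φ ψ => Nat.pair 2 (Nat.pair φ.encode ψ.encode)
  | _, .or φ ψ => Nat.pair 3 (Nat.pair φ.encode ψ.encode)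
  | _, .all φ => Nat.pair 4 φ.encode
  | _, .ex φ => Nat.pair 5 φ.encode

/-- `Σ₀`- and `Π₀`-separated formulas: positive formulas, or conjunctions of a positive
formula with a quantifier-free negative formula. -/
inductive Sep0 : ∀ {k}, GrpFormula k → Prop
  | pos {k} {φ : GrpFormula k} : φ.Positive → Sep0 φ
  | conj {k} {φ ψ : GrpFormula k} : φ.Positive → ψ.NegQF → Sep0 (φ.and ψ)

mutual
  /-- `Σₙ`-separated formulas. -/
  inductive SigmaSep : ℕ → ∀ {k}, GrpFormula k → Prop
    | base {k} {φ : GrpFormula k} : Sep0 φ → SigmaSep 0 φ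
    | ofPi {n k} {φ : GrpFormula k} : PiSep n φ → SigmaSep (n + 1) φ
    | ex {n k} {φ : GrpFormula (k + 1)} : SigmaSep (n + 1) φ → SigmaSep (n + 1) φ.ex

  /-- `Πₙ`-separated formulas. -/
  inductive PiSep : ℕ → ∀ {k}, GrpFormula k → Prop
    | base {k} {φ : GrpFormula k} : Sep0 φ → PiSep 0 φ
    | ofSigma {n k} {φ : GrpFormula k} : SigmaSep n φ → PiSep (n + 1) φ
    | all {n k} {φ : GrpFormula (k + 1)} : PiSep (n + 1) φ → PiSep (n + 1) φ.all
end

mutual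
  /-- Positive prenex `Σₙ` formulas. -/
  inductive PosSigma : ℕ → ∀ {k}, GrpFormula k → Prop
    | base {k} {φ : GrpFormula k} : φ.QuantifierFree → φ.Positive → PosSigma 0 φ
    | ofPi {n k} {φ : GrpFormula k} : PosPi n φ → PosSigma (n + 1) φ
    | ex {n k} {φ : GrpFormula (k + 1)} : PosSigma (n + 1) φ → PosSigma (n + 1) φ.ex

  /-- Positive prenex `Πₙ` formulas. -/
  inductive PosPi : ℕ → ∀ {k}, GrpFormula k → Prop
    | base {k} {φ : GrpFormula k} : φ.QuantifierFree → φ.Positive → PosPi 0 φ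
    | ofSigma {n k} {φ : GrpFormula k} : PosSigma n φ → PosPi (n + 1) φ
    | all {n k} {φ : GrpFormula (k + 1)} : PosPi (n + 1) φ → PosPi (n + 1) φ.all
end

/-- Purely existential formulas: a block of `∃`'s applied to a quantifier-free formula. -/
inductive ExistentialForm : ∀ {k}, GrpFormula k → Prop
  | base {k} {φ : GrpFormula k} : φ.QuantifierFree → ExistentialForm φ
  | ex {k} {φ : GrpFormula (k + 1)} : ExistentialForm φ → ExistentialForm φ.ex

/-- Purely universal formulas: a block of `∀`'s applied to a quantifier-free formula. -/
inductive UniversalForm : ∀ {k}, GrpFormula k → Prop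
  | base {k} {φ : GrpFormula k} : φ.QuantifierFree → UniversalForm φ
  | all {k} {φ : GrpFormula (k + 1)} : UniversalForm φ → UniversalForm φ.all

/-- Prefix a block of `m` existential quantifiers. -/
def exBlock {k : ℕ} : ∀ m : ℕ, GrpFormula (k + m) → GrpFormula k
  | 0, φ => φ
  | m + 1, φ => exBlock m φ.ex

/-- Prefix a block of `m` universal quantifiers. -/
def allBlock {k : ℕ} : ∀ m : ℕ, GrpFormula (k + m) → GrpFormula k
  | 0, φ => φ
  | m + 1, φ => allBlock m φ.all

/-- Extend a valuation of the `k` parameters by a valuation of the `m`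
quantified variables (which occupy the initial positions). -/
def consTuple {G : Type*} : ∀ {m k : ℕ}, (Fin m → G) → (Fin k → G) → Fin (k + m) → G
  | 0, _, _, a => a
  | _ + 1, _, g, a => Fin.cons (g 0) (consTuple (fun i => g i.succ) a)

/-- The join of an `m`-tuple of sequences. -/
def tupleJoin {m : ℕ} (v : Fin m → ℕ → ℕ) : ℕ → ℕ :=
  fun n => Encodable.encode (List.ofFn fun i => v i n)

/-! ### The computable presentation of `Q̄` and its Galois group -/

/-- A fixed computable presentation of the algebraic closure of `ℚ`. -/
abbrev Qbar : Type := AlgebraicClosure ℚ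

/-- The absolute Galois group of `ℚ`, i.e. the automorphism group of `Q̄`. -/
abbrev GalQ : Type := Qbar ≃ₐ[ℚ] Qbar

/-- A computable presentation of `Q̄` together with the fixed computable chain
`ℚ = F₀ ⊂ F₁ ⊂ ⋯` of finite normal extensions of `ℚ` with union `Q̄`,
each generated by a primitive generator `zₙ`. -/
structure GaloisPresentation where
  e : Qbar ≃ ℕ
  F : ℕ → IntermediateField ℚ Qbar
  z : ℕ → Qbar
  F_zero : F 0 = ⊥
  F_lt : ∀ n, F n < F (n + 1)
  normal : ∀ n, Normal ℚ (F n)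
  finiteDim : ∀ n, FiniteDimensional ℚ (F n)
  unionEq : ∀ x : Qbar, ∃ n, x ∈ F n
  genEq : ∀ n, F n = IntermediateField.adjoin ℚ {z n}
  add_comp : Computable₂ fun a b => e (e.symm a + e.symm b)
  mul_comp : Computable₂ fun a b => e (e.symm a * e.symm b)
  neg_comp : Computable fun a => e (-e.symm a)
  inv_comp : Computable fun a => e (e.symm a)⁻¹
  mem_dec : ∃ d : ℕ → ℕ → Bool, Computable₂ d ∧ ∀ n a, d n a = true ↔ e.symm a ∈ F n
  z_comp : Computable fun n => e (z n)

/-- The identification of an automorphism `f` with the sequence `(f(z₁), f(z₂), …)`. -/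
def GaloisPresentation.seqOf (P : GaloisPresentation) (f : GalQ) : ℕ → ℕ :=
  fun n => P.e (f (P.z (n + 1)))

/-- The restriction of an automorphism of `Q̄` to the finite normal extension `Fₙ`. -/
def GaloisPresentation.restrictAut (P : GaloisPresentation) (n : ℕ) (f : GalQ) :
    ↥(P.F n) ≃ₐ[ℚ] ↥(P.F n) :=
  haveI := P.normal n
  AlgEquiv.restrictNormal f ↥(P.F n)

/-- The level-`n` node of the Galois tree determined by an automorphism `σ`. -/
def nodeOf (P : GaloisPresentation) (n : ℕ) (σ : GalQ) : List ℕ :=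
  (List.range n).map fun i => P.e (σ (P.z (i + 1)))

/-- Membership in the Galois tree `T_Q̄`: the nodes at level `n` are the tuples
`(σ(z₁), …, σ(zₙ))` for automorphisms `σ`. -/
def TQmem (P : GaloisPresentation) (l : List ℕ) : Prop :=
  ∃ σ : GalQ, l = nodeOf P l.length σ

/-- The join of the parameter tuple `a`, as a single oracle. -/
def paramJoin (P : GaloisPresentation) {k : ℕ} (a : Fin k → GalQ) : ℕ → ℕ :=
  tupleJoin fun i => P.seqOf (a i)

/-- A bare computable presentation of `Q̄` (without a fixed chain): the field
operations are computable and finitely generated subfields are uniformly decidable. -/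
structure CompPresentation where
  e : Qbar ≃ ℕ
  add_comp : Computable₂ fun a b => e (e.symm a + e.symm b)
  mul_comp : Computable₂ fun a b => e (e.symm a * e.symm b)
  neg_comp : Computable fun a => e (-e.symm a)
  inv_comp : Computable fun a => e (e.symm a)⁻¹
  fg_dec : ∃ d : List ℕ → ℕ → Bool, Computable₂ d ∧
    ∀ (l : List ℕ) (a : ℕ),
      d l a = true ↔ e.symm a ∈ IntermediateField.adjoin ℚ {x : Qbar | ∃ b ∈ l, e.symm b = x}

end

noncomputable section Aux

open GrpFormula

/-- Composition with a map commutes with `Fin.cons`. -/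
lemma comp_cons' {G H : Type*} (h : G → H) {k : ℕ} (g : G) (v : Fin k → G) :
    (fun i : Fin (k+1) => h ((Fin.cons g v : Fin (k+1) → G) i)) = Fin.cons (h g) fun i => h (v i) := by
  funext i
  induction i using Fin.cases with
  | zero => simp
  | succ j => simp

/-- Group homomorphisms commute with term evaluation. -/
lemma term_hom {G H : Type*} [Group G] [Group H] (h : G →* H) :
    ∀ {k : ℕ} (t : GrpTerm k) (v : Fin k → G), h (t.eval v) = t.eval fun i => h (v i)
  | _, .var _, _ => by simp only [GrpTerm.eval]
  | _, .one, _ => by simp only [GrpTerm.eval, map_one]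
  | _, .mul t s, v => by
      simp only [GrpTerm.eval, map_mul, term_hom h t v, term_hom h s v]
  | _, .inv t, v => by
      simp only [GrpTerm.eval, map_inv, term_hom h t v]

/-- Positive formulas are preserved by surjective homomorphisms. -/
lemma sat_of_surj {G H : Type*} [Group G] [Group H] (h : G →* H)
    (hs : Function.Surjective h) :
    ∀ {k : ℕ} (φ : GrpFormula k), φ.Positive → ∀ v : Fin k → G,
      φ.Sat v → φ.Sat fun i => h (v i)
  | _, .eq t s, _, v, hv => by
      show GrpTerm.eval t _ = GrpTerm.eval s _
      rw [← term_hom, ← term_hom]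
      exact congrArg h hv
  | _, .ne _ _, hpos, _, _ => hpos.elim
  | _, .and φ ψ, hpos, v, hv =>
      ⟨sat_of_surj h hs φ hpos.1 v hv.1, sat_of_surj h hs ψ hpos.2 v hv.2⟩
  | _, .or φ ψ, hpos, v, hv =>
      hv.elim (fun hv => Or.inl (sat_of_surj h hs φ hpos.1 v hv))
        (fun hv => Or.inr (sat_of_surj h hs ψ hpos.2 v hv))
  | _, .all φ, hpos, v, hv => by
      intro g'
      obtain ⟨g, rfl⟩ := hs g'
      have := sat_of_surj h hs φ hpos (Fin.cons g v) (hv g)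
      rwa [comp_cons'] at this
  | _, .ex φ, hpos, v, hv => by
      obtain ⟨g, hg⟩ := hv
      refine ⟨h g, ?_⟩
      have := sat_of_surj h hs φ hpos (Fin.cons g v) hg
      rwa [comp_cons'] at this

variable (P : GaloisPresentation)

lemma Fmono : Monotone P.F := monotone_nat_of_le_succ fun n => (P.F_lt n).le

/-- The restriction to `Fₙ` as a monoid homomorphism. -/
def Rhom (n : ℕ) : GalQ →* (↥(P.F n) ≃ₐ[ℚ] ↥(P.F n)) :=
  haveI := P.normal n
  AlgEquiv.restrictNormalHom (↥(P.F n))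

lemma Rhom_eq_restrictAut (n : ℕ) (f : GalQ) : Rhom P n f = P.restrictAut n f := rfl

lemma Rhom_apply (n : ℕ) (f : GalQ) (x : ↥(P.F n)) :
    (Rhom P n f x : Qbar) = f x := by
  haveI := P.normal n
  exact AlgEquiv.restrictNormal_commutes f (P.F n) x

lemma Rhom_surj (n : ℕ) : Function.Surjective (Rhom P n) := by
  haveI := P.normal n
  haveI : Normal ℚ Qbar := @IsAlgClosure.normal ℚ Qbar _ _ _ (AlgebraicClosure.instIsAlgClosure ℚ)
  exact AlgEquiv.restrictNormalHom_surjective _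

lemma Rhom_eq_iff (n : ℕ) (f g : GalQ) :
    Rhom P n f = Rhom P n g ↔ ∀ x ∈ P.F n, f x = g x := by
  constructor
  · intro h x hx
    have h1 := Rhom_apply P n f ⟨x, hx⟩
    have h2 := Rhom_apply P n g ⟨x, hx⟩
    rw [h] at h1
    exact h1.symm.trans h2
  · intro h
    refine AlgEquiv.ext fun x => Subtype.ext ?_
    rw [Rhom_apply, Rhom_apply]
    exact h x x.2

/-- Glue a coherent sequence of automorphisms into a global automorphism. -/
lemma exists_glue (g : ℕ → GalQ)
    (hcoh : ∀ m n, m ≤ n → Rhom P m (g n) = Rhom P m (g m)) :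
    ∃ σ : GalQ, ∀ n, Rhom P n σ = Rhom P n (g n) := by
  classical
  have hU := P.unionEq
  have key : ∀ (x : Qbar) (n : ℕ), x ∈ P.F n → g (hU x).choose x = g n x := by
    intro x n hxn
    have hxl : x ∈ P.F (hU x).choose := (hU x).choose_spec
    have h1 := (Rhom_eq_iff P _ _ _).mp
      (hcoh (hU x).choose (max (hU x).choose n) (le_max_left _ _)) x hxl
    have h2 := (Rhom_eq_iff P _ _ _).mp
      (hcoh n (max (hU x).choose n) (le_max_right _ _)) x hxn
    exact h1.symm.trans h2
  have hinj : Function.Injective (algebraMap ℚ Qbar) := (algebraMap ℚ Qbar).injective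
  haveI : NoZeroSMulDivisors ℚ Qbar := inferInstance
  let σA : Qbar →ₐ[ℚ] Qbar :=
    { toFun := fun x => g (hU x).choose x
      map_one' := (key 1 0 (one_mem _)).trans (map_one (g 0))
      map_mul' := fun x y => by
        obtain ⟨nx, hx⟩ := hU x
        obtain ⟨ny, hy⟩ := hU y
        have hx' : x ∈ P.F (max nx ny) := Fmono P (le_max_left _ _) hx
        have hy' : y ∈ P.F (max nx ny) := Fmono P (le_max_right _ _) hy
        show g (hU (x * y)).choose (x * y) = g (hU x).choose x * g (hU y).choose y
        rw [key (x * y) _ (mul_mem hx' hy'), key x _ hx', key y _ hy', map_mul]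
      map_zero' := (key 0 0 (zero_mem _)).trans (map_zero (g 0))
      map_add' := fun x y => by
        obtain ⟨nx, hx⟩ := hU x
        obtain ⟨ny, hy⟩ := hU y
        have hx' : x ∈ P.F (max nx ny) := Fmono P (le_max_left _ _) hx
        have hy' : y ∈ P.F (max nx ny) := Fmono P (le_max_right _ _) hy
        show g (hU (x + y)).choose (x + y) = g (hU x).choose x + g (hU y).choose y
        rw [key (x + y) _ (add_mem hx' hy'), key x _ hx', key y _ hy', map_add]
      commutes' := fun q =>
        (key _ 0 (IntermediateField.algebraMap_mem _ q)).trans (AlgEquiv.commutes (g 0) q) }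
  haveI : Algebra.IsAlgebraic ℚ Qbar := AlgebraicClosure.isAlgebraic ℚ
  have hbij : Function.Bijective σA := Algebra.IsAlgebraic.algHom_bijective σA
  refine ⟨AlgEquiv.ofBijective σA hbij, fun n => (Rhom_eq_iff P n _ _).mpr fun x hx => ?_⟩
  exact key x n hx

/-- Extract a coherent sequence from a decreasing sequence of nonempty sets of
automorphisms, using an ultrafilter and finiteness of the groups `Aut(Fₙ)`. -/
lemma exists_coherent (C : ℕ → Set GalQ) (hne : ∀ n, (C n).Nonempty)
    (hanti : ∀ m n, m ≤ n → C n ⊆ C m) :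
    ∃ g : ℕ → GalQ, (∀ n, g n ∈ C n) ∧ ∀ m n, m ≤ n → Rhom P m (g n) = Rhom P m (g m) := by
  classical
  choose h hh using hne
  set U : Ultrafilter ℕ := Filter.hyperfilter ℕ with hUdef
  have hE : ∀ j : ℕ, ∃ E : Set ℕ, E ∈ U ∧
      ∀ m m', m ∈ E → m' ∈ E → Rhom P j (h m) = Rhom P j (h m') := by
    intro j
    haveI := P.finiteDim j
    haveI := P.normal j
    letI : Fintype (↥(P.F j) ≃ₐ[ℚ] ↥(P.F j)) := AlgEquiv.fintype ℚ (↥(P.F j))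
    obtain ⟨a, ha⟩ := Ultrafilter.eq_pure_of_finite (U.map fun m => Rhom P j (h m))
    have hmem : (fun m => Rhom P j (h m)) ⁻¹' {a} ∈ U := by
      have h1 : {a} ∈ U.map fun m => Rhom P j (h m) := by
        rw [ha]; exact Ultrafilter.mem_pure.mpr rfl
      exact Ultrafilter.mem_map.mp h1
    refine ⟨_, hmem, fun m m' hm hm' => ?_⟩
    simp only [Set.mem_preimage, Set.mem_singleton_iff] at hm hm'
    rw [hm, hm']
  choose E hEU hEconst using hE
  have hB : ∀ n, (⋂ j ∈ Set.Iic n, E j) ∈ U := fun n =>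
    (Filter.biInter_mem (Set.finite_Iic n)).mpr fun j _ => hEU j
  have hge : ∀ n : ℕ, {m | n ≤ m} ∈ U := by
    intro n
    have hc : {m : ℕ | n ≤ m} ∈ (Filter.cofinite : Filter ℕ) := by
      rw [Filter.mem_cofinite]
      have he : {m : ℕ | n ≤ m}ᶜ = Set.Iio n := by ext m; simp [not_le]
      rw [he]; exact Set.finite_Iio n
    exact Filter.hyperfilter_le_cofinite hc
  have hmex : ∀ n, ∃ m : ℕ, m ∈ (⋂ j ∈ Set.Iic n, E j) ∧ n ≤ m := by
    intro n
    obtain ⟨m, hm1, hm2⟩ := Ultrafilter.nonempty_of_mem (Filter.inter_mem (hB n) (hge n))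
    exact ⟨m, hm1, hm2⟩
  choose mf hmf1 hmf2 using hmex
  refine ⟨fun n => h (mf n), fun n => hanti n (mf n) (hmf2 n) (hh (mf n)), ?_⟩
  intro m n hmn
  have h1 : mf n ∈ E m := by
    have hm := hmf1 n
    simp only [Set.mem_iInter, Set.mem_Iic] at hm
    exact hm m hmn
  have h2 : mf m ∈ E m := by
    have hm := hmf1 m
    simp only [Set.mem_iInter, Set.mem_Iic] at hm
    exact hm m le_rfl
  exact hEconst m _ _ h1 h2

/-- Downward closure: satisfaction at level `n` implies satisfaction at lower levels. -/
lemma sat_down {m n : ℕ} (hmn : m ≤ n) :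
    ∀ {k : ℕ} (φ : GrpFormula k), φ.Positive → ∀ v : Fin k → GalQ,
      (φ.Sat fun i => Rhom P n (v i)) → φ.Sat fun i => Rhom P m (v i)
  | _, .eq t s, _, v, hv => by
      have hv' : Rhom P n (GrpTerm.eval t v) = Rhom P n (GrpTerm.eval s v) := by
        rw [term_hom, term_hom]; exact hv
      show GrpTerm.eval t _ = GrpTerm.eval s _
      rw [← term_hom, ← term_hom]
      exact (Rhom_eq_iff P m _ _).mpr fun x hx =>
        (Rhom_eq_iff P n _ _).mp hv' x (Fmono P hmn hx)
  | _, .ne _ _, hpos, _, _ => hpos.elim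
  | _, .and φ ψ, hpos, v, hv =>
      ⟨sat_down hmn φ hpos.1 v hv.1, sat_down hmn ψ hpos.2 v hv.2⟩
  | _, .or φ ψ, hpos, v, hv =>
      hv.elim (fun hl => Or.inl (sat_down hmn φ hpos.1 v hl))
        (fun hr => Or.inr (sat_down hmn ψ hpos.2 v hr))
  | _, .all φ, hpos, v, hv => by
      intro h'
      obtain ⟨g, rfl⟩ := Rhom_surj P m h'
      have h1 := hv (Rhom P n g)
      rw [← comp_cons'] at h1
      have h2 := sat_down hmn φ hpos (Fin.cons g v) h1
      rwa [comp_cons'] at h2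
  | _, .ex φ, hpos, v, hv => by
      obtain ⟨h', hh⟩ := hv
      obtain ⟨g, rfl⟩ := Rhom_surj P n h'
      rw [← comp_cons'] at hh
      have h2 := sat_down hmn φ hpos (Fin.cons g v) hh
      refine ⟨Rhom P m g, ?_⟩
      rwa [comp_cons'] at h2

/-- The main backward direction: satisfaction at every finite level implies
satisfaction in the full automorphism group. -/
lemma sat_up :
    ∀ {k : ℕ} (φ : GrpFormula k), φ.Positive → ∀ v : Fin k → GalQ,
      (∀ n, φ.Sat fun i => Rhom P n (v i)) → φ.Sat v
  | _, .eq t s, _, v, hv => by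
      show GrpTerm.eval t v = GrpTerm.eval s v
      refine AlgEquiv.ext fun x => ?_
      obtain ⟨n, hn⟩ := P.unionEq x
      have h2 : Rhom P n (GrpTerm.eval t v) = Rhom P n (GrpTerm.eval s v) := by
        rw [term_hom, term_hom]; exact hv n
      exact (Rhom_eq_iff P n _ _).mp h2 x hn
  | _, .ne _ _, hpos, _, _ => hpos.elim
  | _, .and φ ψ, hpos, v, hv =>
      ⟨sat_up φ hpos.1 v fun n => (hv n).1, sat_up ψ hpos.2 v fun n => (hv n).2⟩
  | _, .or φ ψ, hpos, v, hv => by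
      by_cases hφ : ∀ n, φ.Sat fun i => Rhom P n (v i)
      · exact Or.inl (sat_up φ hpos.1 v hφ)
      · push_neg at hφ
        obtain ⟨n₀, hn₀⟩ := hφ
        refine Or.inr (sat_up ψ hpos.2 v fun n => ?_)
        rcases hv (max n n₀) with hP | hQ
        · exact absurd (sat_down P (le_max_right n n₀) φ hpos.1 v hP) hn₀
        · exact sat_down P (le_max_left n n₀) ψ hpos.2 v hQ
  | _, .all φ, hpos, v, hv => by
      intro g
      refine sat_up φ hpos (Fin.cons g v) fun n => ?_
      have h1 := hv n (Rhom P n g)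
      rwa [← comp_cons'] at h1
  | _, .ex φ, hpos, v, hv => by
      classical
      set C : ℕ → Set GalQ :=
        fun n => {g | φ.Sat fun i => Rhom P n ((Fin.cons g v : Fin _ → GalQ) i)} with hC
      have hCinv : ∀ n (g g' : GalQ), Rhom P n g = Rhom P n g' → g ∈ C n → g' ∈ C n := by
        intro n g g' hgg hg
        simp only [hC, Set.mem_setOf_eq] at hg ⊢
        rw [comp_cons'] at hg ⊢
        rwa [← hgg]
      have hne : ∀ n, (C n).Nonempty := by
        intro n
        obtain ⟨h', hh⟩ := hv n
        obtain ⟨g, rfl⟩ := Rhom_surj P n h'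
        refine ⟨g, ?_⟩
        simp only [hC, Set.mem_setOf_eq]
        rwa [← comp_cons'] at hh
      have hanti : ∀ m n, m ≤ n → C n ⊆ C m := by
        intro m n hmn g hg
        simp only [hC, Set.mem_setOf_eq] at hg ⊢
        exact sat_down P hmn φ hpos (Fin.cons g v) hg
      obtain ⟨g, hg, hcoh⟩ := exists_coherent P C hne hanti
      obtain ⟨σ, hσ⟩ := exists_glue P g hcoh
      refine ⟨σ, sat_up φ hpos (Fin.cons σ v) fun n => ?_⟩
      have hmem : σ ∈ C n := hCinv n (g n) σ (hσ n).symm (hg n)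
      simpa only [hC, Set.mem_setOf_eq] using hmem


end Aux

theorem stmt0 (P : GaloisPresentation) {k : ℕ} (φ : GrpFormula k) (hpos : φ.Positive)
    (a : Fin k → GalQ) :
    GrpFormula.Sat φ a ↔
      ∀ n : ℕ, GrpFormula.Sat φ (fun i => P.restrictAut n (a i)) := by
  constructor
  · intro h n
    exact sat_of_surj (Rhom P n) (Rhom_surj P n) φ hpos a h
  · intro h
    exact sat_up P φ hpos a h
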